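/- Blow-up of the smoothing effect constant at the critical exponent: let N ≥ 3 and m_c = (N-2)/N. For each m ∈ (m_c, 1) let C(m) > 0 be chosen so that the fast diffusion Barenblatt profile F_m(y) = (C(m) + k|y|²)^{-1/(1-m)} has unit mass, ∫_{ℝ^N} F_m(y) dy = 1, and let K(m) = F_m(0) = C(m)^{-1/(1-m)} be its maximum. Then lim_{m→m_c⁺} (m - m_c) · log K(m) / log(1/(m - m_c)) = (N-2)/N. -/

import Mathlib

open MeasureTheory Real Filter Topology Set

noncomputable section

/-- Self-similarity exponent `β = 1/(2-N(1-m))` of the fast diffusion Barenblatt solution. -/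
def fdeBeta (N : ℕ) (m : ℝ) : ℝ := 1 / (2 - N * (1 - m))

/-- The constant `k = β(1-m)/(2m)`. -/
def fdeK (N : ℕ) (m : ℝ) : ℝ := fdeBeta N m * (1 - m) / (2 * m)

/-- The fast diffusion Barenblatt profile `F(y) = (C + k|y|²)^{-1/(1-m)}`. -/
def fdeProfile (N : ℕ) (m C : ℝ) (y : EuclideanSpace ℝ (Fin N)) : ℝ :=
  (C + fdeK N m * ‖y‖ ^ 2) ^ (-(1 / (1 - m)))

def fdeI (N : ℕ) (m : ℝ) : ℝ :=
  ∫ z : EuclideanSpace ℝ (Fin N), (1 + ‖z‖^2) ^ (-(1/(1-m)))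

lemma fde_aux_1d (N : ℕ) (hN : 1 ≤ N) {s : ℝ} (hs : (N : ℝ) < s) (b c : ℝ) :
    ∫ r in Ioi (0:ℝ), r ^ (N - 1) * (if r < 1 then b else c * r ^ (-s)) = b / N + c / (s - N) := by
  have hN0 : (N : ℝ) ≠ 0 := by positivity
  have hsplit : Ioo (0:ℝ) 1 ∪ Ici (1:ℝ) = Ioi (0:ℝ) := Ioo_union_Ici_eq_Ioi one_pos
  have hdisj : Disjoint (Ioo (0:ℝ) 1) (Ici (1:ℝ)) := by
    rw [Set.disjoint_left]; intro r hr hr'; exact absurd hr.2 (not_lt.mpr hr')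
  have ha : ((N : ℝ) - 1) - s < -1 := by linarith
  have hInt1 : IntegrableOn (fun r : ℝ => r ^ (N - 1) * (if r < 1 then b else c * r ^ (-s)))
      (Ioo (0:ℝ) 1) := by
    apply IntegrableOn.congr_fun (f := fun r : ℝ => r ^ (N-1) * b)
    · exact (((continuous_pow (N-1)).mul continuous_const).integrableOn_Icc).mono_set
        Ioo_subset_Icc_self
    · intro r hr; simp [hr.2]
    · exact measurableSet_Ioo
  have hInt2 : IntegrableOn (fun r : ℝ => r ^ (N - 1) * (if r < 1 then b else c * r ^ (-s)))
      (Ici (1:ℝ)) := by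
    rw [integrableOn_Ici_iff_integrableOn_Ioi]
    apply IntegrableOn.congr_fun (f := fun r : ℝ => c * r ^ (((N:ℝ) - 1) - s))
    · exact (integrableOn_Ioi_rpow_of_lt ha one_pos).const_mul c
    · intro r hr
      have hr0 : (0:ℝ) < r := lt_trans one_pos hr
      have h1 : ¬ (r < 1) := not_lt.mpr (le_of_lt hr)
      simp only [h1, if_false]
      rw [← Real.rpow_natCast r (N-1), Nat.cast_sub hN, Nat.cast_one,
        show (↑N - 1 - s : ℝ) = (↑N - 1) + (-s) by ring, Real.rpow_add hr0]
      ring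
    · exact measurableSet_Ioi
  rw [← hsplit, setIntegral_union hdisj measurableSet_Ici hInt1 hInt2]
  have e1 : ∫ r in Ioo (0:ℝ) 1, r ^ (N - 1) * (if r < 1 then b else c * r ^ (-s)) = b / N := by
    rw [setIntegral_congr_fun measurableSet_Ioo (g := fun r : ℝ => r ^ (N-1) * b)
      (by intro r hr; simp [hr.2])]
    rw [← integral_Ioc_eq_integral_Ioo, ← intervalIntegral.integral_of_le zero_le_one]
    rw [intervalIntegral.integral_mul_const, integral_pow]
    rw [Nat.sub_add_cancel hN]
    rw [one_pow, zero_pow (by omega), Nat.cast_sub hN, Nat.cast_one]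
    ring_nf
  have e2 : ∫ r in Ici (1:ℝ), r ^ (N - 1) * (if r < 1 then b else c * r ^ (-s)) = c / (s - N) := by
    rw [integral_Ici_eq_integral_Ioi]
    rw [setIntegral_congr_fun measurableSet_Ioi (g := fun r : ℝ => c * r ^ (((N:ℝ) - 1) - s))
      (by
        intro r hr
        have hr0 : (0:ℝ) < r := lt_trans one_pos hr
        have h1 : ¬ (r < 1) := not_lt.mpr (le_of_lt hr)
        simp only [h1, if_false]
        rw [← Real.rpow_natCast r (N-1), Nat.cast_sub hN, Nat.cast_one,
          show (↑N - 1 - s : ℝ) = (↑N - 1) + (-s) by ring, Real.rpow_add hr0]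
        ring)]
    rw [integral_const_mul, integral_Ioi_rpow_of_lt ha one_pos]
    rw [Real.one_rpow]
    have h : s - (↑N:ℝ) ≠ 0 := by linarith
    have h2 : (↑N:ℝ) - 1 - s + 1 ≠ 0 := by intro hh; apply h; linarith
    field_simp
    ring
  rw [e1, e2]

lemma fde_aux_radial (N : ℕ) (hN : 1 ≤ N) {s : ℝ} (hs : (N : ℝ) < s) (b c : ℝ) :
    ∫ x : EuclideanSpace ℝ (Fin N), (if ‖x‖ < 1 then b else c * ‖x‖ ^ (-s)) =
      b * (volume (Metric.ball (0 : EuclideanSpace ℝ (Fin N)) 1)).toReal +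
      c * N * (volume (Metric.ball (0 : EuclideanSpace ℝ (Fin N)) 1)).toReal / (s - N) := by
  haveI : NeZero N := ⟨by omega⟩
  have hrank : Module.finrank ℝ (EuclideanSpace ℝ (Fin N)) = N := finrank_euclideanSpace_fin
  have := integral_fun_norm_addHaar (volume : Measure (EuclideanSpace ℝ (Fin N)))
    (fun r : ℝ => if r < 1 then b else c * r ^ (-s))
  rw [hrank] at this
  rw [this]
  simp only [smul_eq_mul, nsmul_eq_mul]
  rw [fde_aux_1d N hN hs b c]
  have hN0 : (N : ℝ) ≠ 0 := by positivity
  field_simp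
  simp only [measureReal_def]; ring

lemma fde_aux_tail_le {s : ℝ} (hs : 0 < s) {r : ℝ} (hr : 1 ≤ r) :
    r ^ (-s) ≤ 2 ^ (s/2) * (1 + r^2) ^ (-(s/2)) := by
  have hr0 : (0:ℝ) < r := lt_of_lt_of_le one_pos hr
  have h3 : r ^ (-s) = (r^2 : ℝ) ^ (-(s/2)) := by
    rw [← Real.rpow_natCast r 2, ← Real.rpow_mul hr0.le]
    congr 1
    push_cast; ring
  have h1 : (2*r^2 : ℝ) ^ (-(s/2)) ≤ (1+r^2) ^ (-(s/2)) :=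
    Real.rpow_le_rpow_of_nonpos (by positivity) (by nlinarith) (by linarith)
  have h2 : (2*r^2 : ℝ) ^ (-(s/2)) = 2 ^ (-(s/2)) * (r^2 : ℝ) ^ (-(s/2)) :=
    Real.mul_rpow (by norm_num) (by positivity)
  have h4 : (2:ℝ) ^ (s/2) * 2 ^ (-(s/2)) = 1 := by
    rw [← Real.rpow_add two_pos]; norm_num
  calc r ^ (-s) = (r^2 : ℝ) ^ (-(s/2)) := h3
    _ = 2 ^ (s/2) * (2 ^ (-(s/2)) * (r^2 : ℝ) ^ (-(s/2))) := by
        rw [← mul_assoc, h4, one_mul]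
    _ = 2 ^ (s/2) * (2*r^2 : ℝ) ^ (-(s/2)) := by rw [h2]
    _ ≤ 2 ^ (s/2) * (1+r^2) ^ (-(s/2)) := by
        apply mul_le_mul_of_nonneg_left h1 (by positivity)

lemma fde_aux_integrable_ite (N : ℕ) {s : ℝ} (hs : (N:ℝ) < s) (b c : ℝ) :
    Integrable (fun x : EuclideanSpace ℝ (Fin N) => if ‖x‖ < 1 then b else c * ‖x‖ ^ (-s)) := by
  have hs0 : 0 < s := lt_of_le_of_lt (Nat.cast_nonneg N) hs
  have hrank : Module.finrank ℝ (EuclideanSpace ℝ (Fin N)) = N := finrank_euclideanSpace_fin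
  have hint : Integrable (fun x : EuclideanSpace ℝ (Fin N) => (1 + ‖x‖^2) ^ (-s/2)) :=
    integrable_rpow_neg_one_add_norm_sq (by rw [hrank]; exact hs)
  have hint2 : Integrable (fun x : EuclideanSpace ℝ (Fin N) =>
      (|b| + |c|) * (2 ^ (s/2) * (1 + ‖x‖^2) ^ (-(s/2)))) := by
    simpa [neg_div, mul_assoc] using hint.const_mul ((|b| + |c|) * 2 ^ (s/2))
  refine hint2.mono' ?_ ?_
  · refine Measurable.aestronglyMeasurable ?_
    exact Measurable.ite (measurableSet_lt measurable_norm measurable_const)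
      measurable_const (by fun_prop)
  · filter_upwards with x
    by_cases hx : ‖x‖ < 1
    · simp only [hx, if_true]
      have h1 : (2:ℝ) ^ (-(s/2)) ≤ (1 + ‖x‖^2) ^ (-(s/2)) :=
        Real.rpow_le_rpow_of_nonpos (by positivity) (by nlinarith [norm_nonneg x]) (by linarith)
      have h4 : (2:ℝ) ^ (s/2) * 2 ^ (-(s/2)) = 1 := by
        rw [← Real.rpow_add two_pos]; norm_num
      have h5 : (1:ℝ) ≤ 2 ^ (s/2) * (1 + ‖x‖^2) ^ (-(s/2)) := by
        calc (1:ℝ) = 2 ^ (s/2) * 2 ^ (-(s/2)) := h4.symm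
          _ ≤ 2 ^ (s/2) * (1 + ‖x‖^2) ^ (-(s/2)) :=
            mul_le_mul_of_nonneg_left h1 (by positivity)
      calc ‖b‖ = |b| * 1 := by rw [mul_one]; rfl
        _ ≤ (|b| + |c|) * (2 ^ (s/2) * (1 + ‖x‖^2) ^ (-(s/2))) :=
          mul_le_mul (by simp [abs_nonneg]) h5 one_pos.le (by positivity)
    · simp only [hx, if_false]
      push_neg at hx
      have h6 := fde_aux_tail_le hs0 hx
      calc ‖c * ‖x‖ ^ (-s)‖ = |c| * ‖x‖ ^ (-s) := by
            rw [norm_mul]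
            congr 1
            exact abs_of_nonneg (Real.rpow_nonneg (norm_nonneg x) _)
        _ ≤ |c| * (2 ^ (s/2) * (1 + ‖x‖^2) ^ (-(s/2))) :=
            mul_le_mul_of_nonneg_left h6 (abs_nonneg c)
        _ ≤ (|b| + |c|) * (2 ^ (s/2) * (1 + ‖x‖^2) ^ (-(s/2))) :=
            mul_le_mul_of_nonneg_right (by simp [abs_nonneg]) (by positivity)

lemma fde_aux_integrable (N : ℕ) {p : ℝ} (hs : (N:ℝ) < 2*p) :
    Integrable (fun x : EuclideanSpace ℝ (Fin N) => (1 + ‖x‖^2) ^ (-p)) := by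
  have hrank : Module.finrank ℝ (EuclideanSpace ℝ (Fin N)) = N := finrank_euclideanSpace_fin
  have := integrable_rpow_neg_one_add_norm_sq (μ := volume)
    (E := EuclideanSpace ℝ (Fin N)) (r := 2*p) (by rw [hrank]; exact hs)
  simpa [show -(2*p)/2 = -p by ring] using this

lemma fde_aux_sq_rpow {n : ℕ} (x : EuclideanSpace ℝ (Fin n)) (p : ℝ) :
    ((‖x‖^2 : ℝ)) ^ (-p) = ‖x‖ ^ (-(2*p)) := by
  rw [← Real.rpow_natCast ‖x‖ 2, ← Real.rpow_mul (norm_nonneg x)]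
  congr 1
  push_cast; ring

lemma fde_aux_I_upper (N : ℕ) (hN : 1 ≤ N) {p : ℝ} (hp : (N:ℝ) < 2*p) :
    ∫ x : EuclideanSpace ℝ (Fin N), (1 + ‖x‖^2) ^ (-p) ≤
      (volume (Metric.ball (0 : EuclideanSpace ℝ (Fin N)) 1)).toReal +
      (N:ℝ) * (volume (Metric.ball (0 : EuclideanSpace ℝ (Fin N)) 1)).toReal / (2*p - N) := by
  have hp0 : 0 < p := by have := Nat.cast_nonneg (α := ℝ) N; linarith
  have hb := integral_mono (fde_aux_integrable N hp) (fde_aux_integrable_ite N hp 1 1) ?_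
  · calc ∫ x : EuclideanSpace ℝ (Fin N), (1 + ‖x‖^2) ^ (-p)
        ≤ ∫ x : EuclideanSpace ℝ (Fin N), (if ‖x‖ < 1 then 1 else 1 * ‖x‖ ^ (-(2*p))) := hb
      _ = _ := by rw [fde_aux_radial N hN hp 1 1]; ring
  · intro x
    by_cases hx : ‖x‖ < 1
    · simp only [hx, if_true]
      exact Real.rpow_le_one_of_one_le_of_nonpos
        (le_add_of_nonneg_right (sq_nonneg _)) (by linarith)
    · simp only [hx, if_false, one_mul]
      push_neg at hx
      rw [← fde_aux_sq_rpow x p]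
      exact Real.rpow_le_rpow_of_nonpos (by nlinarith) (by nlinarith) (by linarith)

lemma fde_aux_I_lower (N : ℕ) (hN : 1 ≤ N) {p : ℝ} (hp : (N:ℝ) < 2*p) :
    (2:ℝ) ^ (-p) * (N:ℝ) * (volume (Metric.ball (0 : EuclideanSpace ℝ (Fin N)) 1)).toReal
      / (2*p - N) ≤ ∫ x : EuclideanSpace ℝ (Fin N), (1 + ‖x‖^2) ^ (-p) := by
  have hp0 : 0 < p := by have := Nat.cast_nonneg (α := ℝ) N; linarith
  have hb := integral_mono (fde_aux_integrable_ite N hp 0 (2 ^ (-p)))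
    (fde_aux_integrable N hp) ?_
  · calc (2:ℝ) ^ (-p) * (N:ℝ) * (volume (Metric.ball (0 : EuclideanSpace ℝ (Fin N)) 1)).toReal
          / (2*p - N)
        = ∫ x : EuclideanSpace ℝ (Fin N), (if ‖x‖ < 1 then 0 else 2 ^ (-p) * ‖x‖ ^ (-(2*p))) := by
          rw [fde_aux_radial N hN hp 0 (2 ^ (-p))]; ring
      _ ≤ _ := hb
  · intro x
    by_cases hx : ‖x‖ < 1
    · simp only [hx, if_true]
      positivity
    · simp only [hx, if_false]
      push_neg at hx
      have h2 : (2:ℝ) ^ (-p) * ‖x‖ ^ (-(2*p)) = (2 * ‖x‖^2) ^ (-p) := by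
        rw [Real.mul_rpow (by norm_num) (by positivity), fde_aux_sq_rpow x p]
      rw [h2]
      exact Real.rpow_le_rpow_of_nonpos (by positivity) (by nlinarith) (by linarith)

lemma fde_scaling (N : ℕ) (hN : 1 ≤ N) {m Cm : ℝ} (hC : 0 < Cm) (hk : 0 < fdeK N m)
    (hmass : ∫ y, fdeProfile N m Cm y = 1) :
    fdeI N m = Cm ^ ((1/(1-m)) - (N:ℝ)/2) * (fdeK N m) ^ ((N:ℝ)/2) := by
  unfold fdeI
  set k := fdeK N m with hkdef
  set p := 1/(1-m) with hpdef
  set c := (Cm / k) ^ ((1:ℝ)/2) with hcdef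
  have hck : (0:ℝ) < Cm / k := div_pos hC hk
  have hc : 0 < c := Real.rpow_pos_of_pos hck _
  have hc2 : c ^ 2 = Cm / k := by
    rw [hcdef, ← Real.rpow_natCast ((Cm/k) ^ ((1:ℝ)/2)) 2, ← Real.rpow_mul hck.le]
    norm_num
  have hrank : Module.finrank ℝ (EuclideanSpace ℝ (Fin N)) = N := finrank_euclideanSpace_fin
  have hcomp : ∀ z : EuclideanSpace ℝ (Fin N),
      fdeProfile N m Cm (c • z) = Cm ^ (-p) * (1 + ‖z‖^2) ^ (-p) := by
    intro z
    rw [fdeProfile, norm_smul, Real.norm_eq_abs, abs_of_pos hc, mul_pow, hc2]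
    have hbase : Cm + k * (Cm / k * ‖z‖ ^ 2) = Cm * (1 + ‖z‖^2) := by
      field_simp
    rw [hbase, Real.mul_rpow hC.le (by positivity)]
  have hcov := MeasureTheory.Measure.integral_comp_smul
    (volume : Measure (EuclideanSpace ℝ (Fin N))) (fdeProfile N m Cm) c
  rw [hmass, hrank] at hcov
  simp only [hcomp] at hcov
  rw [integral_const_mul] at hcov
  have hcN : c ^ N = (Cm / k) ^ ((N:ℝ)/2) := by
    rw [hcdef, ← Real.rpow_natCast ((Cm/k) ^ ((1:ℝ)/2)) N, ← Real.rpow_mul hck.le]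
    congr 1
    ring
  rw [hcN] at hcov
  have habs : |((Cm / k) ^ ((N:ℝ)/2))⁻¹| = ((Cm / k) ^ ((N:ℝ)/2))⁻¹ :=
    abs_of_pos (by positivity)
  rw [habs, smul_eq_mul, mul_one] at hcov
  -- hcov : Cm ^ (-p) * ∫ = ((Cm/k)^(N/2))⁻¹
  have h1 : (Cm/k) ^ ((N:ℝ)/2) = Cm ^ ((N:ℝ)/2) / k ^ ((N:ℝ)/2) := Real.div_rpow hC.le hk.le _
  have h2 : Cm ^ (-p) = (Cm ^ p)⁻¹ := Real.rpow_neg hC.le p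
  have h3 : Cm ^ (p - (N:ℝ)/2) = Cm ^ p / Cm ^ ((N:ℝ)/2) := Real.rpow_sub hC _ _
  have hA : (0:ℝ) < Cm ^ p := Real.rpow_pos_of_pos hC _
  have hB : (0:ℝ) < Cm ^ ((N:ℝ)/2) := Real.rpow_pos_of_pos hC _
  have hK2 : (0:ℝ) < k ^ ((N:ℝ)/2) := Real.rpow_pos_of_pos hk _
  rw [h1, h2] at hcov
  rw [h3]
  field_simp at hcov ⊢
  linarith [hcov]

lemma fde_alg (n t w X lm um : ℝ) (hn : n ≠ 0) (ht : t ≠ 0) (hw : w ≠ 0) (hu : um ≠ 0) :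
    t * (-(1/w) * ((X - n/2*(lm - um)) / (n*t/(2*w)))) / (-um)
      = 1 + (2/n) * (X/um) - lm/um := by
  field_simp
  ring

set_option maxHeartbeats 2000000 in
/-- Blow-up of the smoothing effect constant at the critical exponent
`m_c = (N-2)/N`, `N ≥ 3`: if `C(m) > 0` normalizes the Barenblatt profile
`F_m` to unit mass and `K(m) = F_m(0) = C(m)^{-1/(1-m)}` is its maximum, then
`(m-m_c) log K(m) / log(1/(m-m_c)) → (N-2)/N` as `m → m_c⁺`. -/
theorem fde_smoothing_constant_blowup (N : ℕ) (hN : 3 ≤ N)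
    (mc : ℝ) (hmc : mc = ((N : ℝ) - 2) / N)
    (C : ℝ → ℝ) (hCpos : ∀ m, mc < m → m < 1 → 0 < C m)
    (hmass : ∀ m, mc < m → m < 1 → ∫ y, fdeProfile N m (C m) y = 1)
    (K : ℝ → ℝ) (hK : ∀ m, K m = C m ^ (-(1 / (1 - m)))) :
    Tendsto (fun m => (m - mc) * Real.log (K m) / Real.log (1 / (m - mc)))
      (𝓝[>] mc) (𝓝 (((N : ℝ) - 2) / N)) := by
  have hN1 : 1 ≤ N := by omega
  set n : ℝ := (N : ℝ) with hn
  have hn3 : (3:ℝ) ≤ n := by rw [hn]; exact_mod_cast hN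
  have hn0 : (0:ℝ) < n := by linarith
  have hn2 : (0:ℝ) < n - 2 := by linarith
  have hmc0 : 0 < mc := by rw [hmc]; exact div_pos (by linarith) hn0
  have hV : 0 < (volume (Metric.ball (0 : EuclideanSpace ℝ (Fin N)) 1)).toReal := by
    haveI : NeZero N := ⟨by omega⟩
    exact ENNReal.toReal_pos (Metric.measure_ball_pos volume _ one_pos).ne' measure_ball_lt_top.ne
  set V : ℝ := (volume (Metric.ball (0 : EuclideanSpace ℝ (Fin N)) 1)).toReal with hVdef
  set M₁ : ℝ := max |Real.log (2^(-n)*V/n)| |Real.log (2*V)| with hM1def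
  set M₂ : ℝ := max |Real.log (1/(2*n^2))| |Real.log (1/((n-2)*n))| with hM2def
  have hnm : n * mc = n - 2 := by rw [hmc]; field_simp
  have hIoo : Ioo mc (mc + 1/(2*n)) ∈ 𝓝[>] mc :=
    Ioo_mem_nhdsGT_of_mem ⟨le_refl mc, lt_add_of_pos_right mc (by positivity)⟩
  -- the key pointwise facts
  have key : ∀ m ∈ Ioo mc (mc + 1/(2*n)),
      (m - mc) * Real.log (K m) / Real.log (1 / (m - mc)) =
        1 + (2/n) * (Real.log (fdeI N m) / Real.log (m - mc))
          - Real.log ((1-m)/(2*m*n)) / Real.log (m - mc) ∧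
      |Real.log (fdeI N m) + Real.log (m - mc)| ≤ M₁ ∧
      |Real.log ((1-m)/(2*m*n))| ≤ M₂ ∧ Real.log (m - mc) ≠ 0 := by
    rintro m ⟨hm1, hm2⟩
    have ht : 0 < m - mc := sub_pos.2 hm1
    have ht1 : m - mc < 1 := by
      have h2n : 1/(2*n) < 1 := by rw [div_lt_one (by linarith)]; linarith
      linarith
    have hn1m : 1 < (1-m)*n := by
      have h1 : n * (1/(2*n)) = 1/2 := by field_simp
      nlinarith [hnm]
    have h1mpos : (0:ℝ) < 1 - m := by nlinarith
    have h1m : 1/n < 1 - m := by rw [div_lt_iff₀ hn0]; linarith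
    have hm1' : m < 1 := by linarith
    have hmpos : 0 < m := lt_trans hmc0 hm1
    have hD : 2 - n*(1-m) = n*(m - mc) := by linear_combination hnm
    have hppos : (0:ℝ) < 1/(1-m) := by positivity
    have hpn : 1/(1-m) < n := by rw [div_lt_iff₀ h1mpos]; linarith
    have h2pn : 2*(1/(1-m)) - n = n*(m-mc)/(1-m) := by
      rw [eq_div_iff h1mpos.ne']
      field_simp
      linarith [hnm]
    have h2p : n < 2*(1/(1-m)) := by
      have : (0:ℝ) < n*(m-mc)/(1-m) := by positivity
      linarith [h2pn]
    have hkeq : fdeK N m = (1-m)/(2*m*(n*(m-mc))) := by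
      rw [fdeK, fdeBeta, ← hn, hD]
      field_simp
    have hkpos : 0 < fdeK N m := by rw [hkeq]; positivity
    have hCm : 0 < C m := hCpos m hm1 hm1'
    have hIm : fdeI N m = C m ^ ((1/(1-m)) - n/2) * (fdeK N m) ^ (n/2) :=
      fde_scaling N hN1 hCm hkpos (hmass m hm1 hm1')
    have hIpos : 0 < fdeI N m := by
      rw [hIm]
      positivity
    have hlogI : Real.log (fdeI N m) =
        ((1/(1-m)) - n/2) * Real.log (C m) + (n/2) * Real.log (fdeK N m) := by
      rw [hIm, Real.log_mul (Real.rpow_pos_of_pos hCm _).ne' (Real.rpow_pos_of_pos hkpos _).ne',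
        Real.log_rpow hCm, Real.log_rpow hkpos]
    have hup : fdeI N m ≤ V + n * V / (2*(1/(1-m)) - n) := by
      have h := fde_aux_I_upper N hN1 (p := 1/(1-m)) (by rw [← hn]; exact h2p)
      rw [← hn, ← hVdef] at h
      exact h
    have hlo : (2:ℝ)^(-(1/(1-m))) * n * V / (2*(1/(1-m)) - n) ≤ fdeI N m := by
      have h := fde_aux_I_lower N hN1 (p := 1/(1-m)) (by rw [← hn]; exact h2p)
      rw [← hn, ← hVdef] at h
      exact h
    have hup2 : fdeI N m * (m - mc) ≤ 2*V := by
      have h1 := mul_le_mul_of_nonneg_right hup ht.le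
      have h2 : (V + n*V/(2*(1/(1-m)) - n)) * (m - mc) = V*(m-mc) + V*(1-m) := by
        rw [h2pn]
        field_simp
      rw [h2] at h1
      have e1 : V*(m-mc) ≤ V := mul_le_of_le_one_right hV.le ht1.le
      have e2 : V*(1-m) ≤ V := mul_le_of_le_one_right hV.le (by linarith)
      linarith
    have hlo2 : 2^(-n)*V/n ≤ fdeI N m * (m - mc) := by
      have h1 := mul_le_mul_of_nonneg_right hlo ht.le
      have h2 : (2:ℝ)^(-(1/(1-m))) * n * V / (2*(1/(1-m)) - n) * (m - mc)
          = 2^(-(1/(1-m))) * V * (1-m) := by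
        rw [h2pn]
        field_simp
      rw [h2] at h1
      have h3 : (2:ℝ)^(-n) ≤ 2^(-(1/(1-m))) :=
        Real.rpow_le_rpow_of_exponent_le one_le_two (by linarith)
      have h4 : 2^(-n)*V/n ≤ 2^(-(1/(1-m))) * V * (1-m) := by
        rw [div_le_iff₀ hn0]
        have h5 : (0:ℝ) ≤ 2^(-(1/(1-m))) * V := by positivity
        calc 2^(-n)*V ≤ 2^(-(1/(1-m)))*V := mul_le_mul_of_nonneg_right h3 hV.le
          _ = 2^(-(1/(1-m)))*V*1 := by ring
          _ ≤ 2^(-(1/(1-m)))*V*((1-m)*n) := mul_le_mul_of_nonneg_left hn1m.le h5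
          _ = 2^(-(1/(1-m)))*V*(1-m)*n := by ring
      exact le_trans h4 h1
    have hune : Real.log (m - mc) ≠ 0 := (Real.log_neg ht ht1).ne
    refine ⟨?_, ?_, ?_, hune⟩
    · -- the main algebraic identity
      have hδpos : (0:ℝ) < 1/(1-m) - n/2 := by linarith
      have hδeq : 1/(1-m) - n/2 = n*(m-mc)/(2*(1-m)) := by
        rw [← hD, eq_div_iff (by positivity)]
        field_simp
      have hlogC : Real.log (C m) =
          (Real.log (fdeI N m) - n/2 * Real.log (fdeK N m)) / (1/(1-m) - n/2) := by
        rw [eq_div_iff hδpos.ne']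
        linear_combination -hlogI
      have hsplit : (1-m)/(2*m*(n*(m-mc))) = ((1-m)/(2*m*n))/(m-mc) := by
        rw [div_div]
        ring_nf
      have hlogk : Real.log (fdeK N m) =
          Real.log ((1-m)/(2*m*n)) - Real.log (m - mc) := by
        rw [hkeq, hsplit, Real.log_div (by positivity : (0:ℝ) < (1-m)/(2*m*n)).ne' ht.ne']
      rw [hK m, Real.log_rpow hCm, one_div (m - mc), Real.log_inv, hlogC, hlogk, hδeq]
      exact fde_alg n (m - mc) (1-m) (Real.log (fdeI N m)) (Real.log ((1-m)/(2*m*n)))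
        (Real.log (m - mc)) hn0.ne' ht.ne' h1mpos.ne' hune
    · have heq : Real.log (fdeI N m) + Real.log (m - mc) = Real.log (fdeI N m * (m - mc)) :=
        (Real.log_mul hIpos.ne' ht.ne').symm
      rw [heq]
      have hl1 : Real.log (2^(-n)*V/n) ≤ Real.log (fdeI N m * (m-mc)) :=
        Real.log_le_log (by positivity) hlo2
      have hl2 : Real.log (fdeI N m * (m-mc)) ≤ Real.log (2*V) :=
        Real.log_le_log (by positivity) hup2
      exact abs_le_max_abs_abs hl1 hl2
    · have hr1 : 1/(2*n^2) ≤ (1-m)/(2*m*n) := by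
        rw [div_le_div_iff₀ (by positivity) (by positivity)]
        nlinarith
      have hr2 : (1-m)/(2*m*n) ≤ 1/((n-2)*n) := by
        rw [div_le_div_iff₀ (by positivity) (by positivity)]
        nlinarith [hnm]
      have hl1 : Real.log (1/(2*n^2)) ≤ Real.log ((1-m)/(2*m*n)) :=
        Real.log_le_log (by positivity) hr1
      have hl2 : Real.log ((1-m)/(2*m*n)) ≤ Real.log (1/((n-2)*n)) :=
        Real.log_le_log (by positivity) hr2
      exact abs_le_max_abs_abs hl1 hl2
  -- limit machinery
  have hu_bot : Tendsto (fun m => Real.log (m - mc)) (𝓝[>] mc) atBot := by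
    apply Real.tendsto_log_nhdsGT_zero.comp
    rw [tendsto_nhdsWithin_iff]
    constructor
    · have h : Tendsto (fun m : ℝ => m - mc) (𝓝 mc) (𝓝 (mc - mc)) :=
        (continuous_id.sub continuous_const).tendsto mc
      rw [sub_self] at h
      exact h.mono_left nhdsWithin_le_nhds
    · exact eventually_mem_nhdsWithin.mono fun m hm => Set.mem_Ioi.2 (sub_pos.2 hm)
  have habs : Tendsto (fun m => |Real.log (m - mc)|) (𝓝[>] mc) atTop :=
    tendsto_abs_atBot_atTop.comp hu_bot
  have hdiv : ∀ M : ℝ, Tendsto (fun m => M / |Real.log (m - mc)|) (𝓝[>] mc) (𝓝 0) :=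
    fun M => Tendsto.div_atTop tendsto_const_nhds habs
  have he0 : Tendsto (fun m => (Real.log (fdeI N m) + Real.log (m - mc)) / Real.log (m - mc))
      (𝓝[>] mc) (𝓝 0) := by
    apply squeeze_zero_norm' _ (hdiv M₁)
    filter_upwards [hIoo] with m hm
    obtain ⟨-, hb, -, hu0⟩ := key m hm
    rw [Real.norm_eq_abs, abs_div]
    exact (div_le_div_iff_of_pos_right (abs_pos.2 hu0)).2 hb
  have h1 : Tendsto (fun m => Real.log (fdeI N m) / Real.log (m - mc)) (𝓝[>] mc) (𝓝 (-1)) := by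
    have h2 := he0.sub (tendsto_const_nhds (x := (1:ℝ)))
    rw [zero_sub] at h2
    apply h2.congr'
    filter_upwards [hIoo] with m hm
    obtain ⟨-, -, -, hu0⟩ := key m hm
    rw [add_div, div_self hu0]
    ring
  have h2 : Tendsto (fun m => Real.log ((1-m)/(2*m*n)) / Real.log (m - mc)) (𝓝[>] mc) (𝓝 0) := by
    apply squeeze_zero_norm' _ (hdiv M₂)
    filter_upwards [hIoo] with m hm
    obtain ⟨-, -, hb, hu0⟩ := key m hm
    rw [Real.norm_eq_abs, abs_div]
    exact (div_le_div_iff_of_pos_right (abs_pos.2 hu0)).2 hb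
  have hG : Tendsto (fun m => 1 + (2/n) * (Real.log (fdeI N m) / Real.log (m - mc))
      - Real.log ((1-m)/(2*m*n)) / Real.log (m - mc)) (𝓝[>] mc) (𝓝 (1 + (2/n)*(-1) - 0)) :=
    (tendsto_const_nhds.add (h1.const_mul (2/n))).sub h2
  have hval : (1 + (2/n)*(-1) - 0 : ℝ) = (n - 2)/n := by
    field_simp
    ring
  have hEq : (fun m => 1 + (2/n) * (Real.log (fdeI N m) / Real.log (m - mc))
      - Real.log ((1-m)/(2*m*n)) / Real.log (m - mc)) =ᶠ[𝓝[>] mc]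
      (fun m => (m - mc) * Real.log (K m) / Real.log (1 / (m - mc))) := by
    filter_upwards [hIoo] with m hm
    exact ((key m hm).1).symm
  have hfinal := hG.congr' hEq
  rw [hval] at hfinal
  exact hfinal
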